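/- For every n ≥ 1 and every finite list of colorings c_0, …, c_k, where for each i ≤ k the coloring c_i assigns a natural number to every m_i-element subset of ℕ and m_i ≤ n, there exist an infinite set T ⊆ ℕ and a natural number j such that c_i(s) ≠ j for every i ≤ k and every m_i-element subset s of T. -/
import Mathlib

/-- Infinite Ramsey theorem: any coloring of the `n`-element subsets of an infinite
set `S ⊆ ℕ` with finitely many colors admits an infinite homogeneous subset. -/
theorem myInfiniteRamsey {α : Type} [Finite α] :
    ∀ (n : ℕ) (f : Finset ℕ → α) (S : Set ℕ), S.Infinite →
      ∃ T : Set ℕ, T ⊆ S ∧ T.Infinite ∧ ∃ v : α,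
        ∀ s : Finset ℕ, ↑s ⊆ T → s.card = n → f s = v := by
  intro n
  induction n with
  | zero =>
    intro f S hS
    refine ⟨S, subset_rfl, hS, f ∅, fun s _ hcard => ?_⟩
    rw [Finset.card_eq_zero] at hcard
    rw [hcard]
  | succ n IH =>
    intro f S hS
    -- one-step construction
    have step : ∀ S' : Set ℕ, S'.Infinite →
        ∃ (T' : Set ℕ) (a : ℕ) (v : α), T'.Infinite ∧ T' ⊆ S' ∧ (∀ x ∈ T', a < x) ∧
          a ∈ S' ∧ ∀ s : Finset ℕ, ↑s ⊆ T' → s.card = n → f (insert a s) = v := by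
      intro S' hS'
      obtain ⟨a, ha⟩ := hS'.nonempty
      have hS'' : (S' \ Set.Iic a).Infinite := hS'.diff (Set.finite_Iic a)
      obtain ⟨T, hTsub, hTinf, v, hv⟩ := IH (fun s => f (insert a s)) _ hS''
      refine ⟨T, a, v, hTinf, fun x hx => (hTsub hx).1, fun x hx => ?_, ha, hv⟩
      have := hTsub hx
      simp only [Set.mem_diff, Set.mem_Iic, not_le] at this
      exact this.2
    choose Tf Af Vf hInf hSub hGt hMem hHom using step
    -- the recursively defined decreasing sequence of infinite sets
    let seq : ℕ → {X : Set ℕ // X.Infinite} := fun i =>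
      Nat.rec ⟨S, hS⟩ (fun _ p => ⟨Tf p.1 p.2, hInf p.1 p.2⟩) i
    let a : ℕ → ℕ := fun i => Af (seq i).1 (seq i).2
    let w : ℕ → α := fun i => Vf (seq i).1 (seq i).2
    have hseq : ∀ i, (seq (i + 1)).1 = Tf (seq i).1 (seq i).2 := fun i => rfl
    have hsub : ∀ i, (seq (i + 1)).1 ⊆ (seq i).1 := fun i => hSub (seq i).1 (seq i).2
    have hmono : ∀ i j, i ≤ j → (seq j).1 ⊆ (seq i).1 := by
      intro i j hij
      induction j with
      | zero => cases Nat.le_zero.mp hij; exact subset_rfl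
      | succ j IHj =>
        rcases Nat.lt_or_ge i (j + 1) with h | h
        · exact (IHj (Nat.lt_succ_iff.mp h)).trans' (hsub j)
        · cases Nat.le_antisymm hij h; exact subset_rfl
    have hamem : ∀ i, a i ∈ (seq i).1 := fun i => hMem _ _
    have hagt : ∀ i, ∀ x ∈ (seq (i + 1)).1, a i < x := fun i x hx =>
      hGt (seq i).1 (seq i).2 x hx
    have hhom : ∀ i, ∀ s : Finset ℕ, ↑s ⊆ (seq (i + 1)).1 → s.card = n →
        f (insert (a i) s) = w i := fun i s hs hc => hHom (seq i).1 (seq i).2 s hs hc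
    have hstrict : ∀ i j, i < j → a i < a j := by
      intro i j hij
      exact hagt i (a j) (hmono (i + 1) j hij (hamem j))
    have hainj : Function.Injective a := by
      intro i j h
      rcases lt_trichotomy i j with h' | h' | h'
      · exact absurd h (Nat.ne_of_lt (hstrict _ _ h'))
      · exact h'
      · exact absurd h.symm (Nat.ne_of_lt (hstrict _ _ h'))
    -- pigeonhole on the colors w i
    obtain ⟨b, hb⟩ := Finite.exists_infinite_fiber w
    have hI : (w ⁻¹' {b}).Infinite := Set.infinite_coe_iff.mp hb
    refine ⟨a '' (w ⁻¹' {b}), ?_, hI.image (hainj.injOn), b, ?_⟩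
    · rintro x ⟨i, _, rfl⟩
      exact hmono 0 i (Nat.zero_le i) (hamem i)
    · intro s hssub hscard
      have hne : s.Nonempty := Finset.card_pos.mp (by omega)
      obtain ⟨i, hi, hix⟩ := hssub (Finset.mem_coe.mpr (s.min'_mem hne))
      have ht : (↑(s.erase (s.min' hne)) : Set ℕ) ⊆ (seq (i + 1)).1 := by
        intro y hy
        simp only [Finset.coe_erase, Set.mem_diff] at hy
        obtain ⟨j, hj, rfl⟩ := hssub hy.1
        have hij : i < j := by
          by_contra hle
          push_neg at hle
          rcases Nat.lt_or_ge i j with h' | h'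
          · omega
          · rcases Nat.eq_or_lt_of_le h' with h'' | h''
            · exact hy.2 (by simp [h'', hix])
            · have := hstrict j i h''
              have := s.min'_le _ (Finset.mem_coe.mp hy.1)
              omega
        exact hmono (i + 1) j hij (hamem j)
      have hcard : (s.erase (s.min' hne)).card = n :=
        by rw [Finset.card_erase_of_mem (s.min'_mem hne)]; omega
      have := hhom i _ ht hcard
      rw [hix, Finset.insert_erase (s.min'_mem hne)] at this
      rw [this]
      exact hi

/-- Iterated form: simultaneous homogeneity for finitely many colorings. -/
theorem myMultiRamsey {α : Type} [Finite α] :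
    ∀ (K : ℕ) (mm : Fin K → ℕ) (g : Fin K → Finset ℕ → α) (S : Set ℕ), S.Infinite →
      ∃ T : Set ℕ, T ⊆ S ∧ T.Infinite ∧ ∃ v : Fin K → α,
        ∀ i, ∀ s : Finset ℕ, ↑s ⊆ T → s.card = mm i → g i s = v i := by
  intro K
  induction K with
  | zero =>
    intro mm g S hS
    exact ⟨S, subset_rfl, hS, Fin.elim0, fun i => i.elim0⟩
  | succ K IH =>
    intro mm g S hS
    obtain ⟨T0, hT0sub, hT0inf, v0, hv0⟩ := myInfiniteRamsey (mm 0) (g 0) S hS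
    obtain ⟨T, hTsub, hTinf, vr, hvr⟩ :=
      IH (fun i => mm i.succ) (fun i => g i.succ) T0 hT0inf
    refine ⟨T, hTsub.trans hT0sub, hTinf, Fin.cases v0 vr, fun i => ?_⟩
    refine Fin.cases ?_ ?_ i
    · intro s hs hc
      simpa using hv0 s (fun x hx => hTsub (hs hx)) hc
    · intro j s hs hc
      simpa using hvr j s hs hc

/-- For every `n ≥ 1` and every finite list of colorings `c 0, …, c k`,
where the coloring `c i` assigns a natural number to every `m i`-element subset of `ℕ`
and `m i ≤ n`, there exist an infinite set `T ⊆ ℕ` and a `j` such that `c i s ≠ j` for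
every `i ≤ k` and every `m i`-element subset `s` of `T`. -/
theorem thin_set_simultaneous (n : ℕ) (hn : 1 ≤ n) (k : ℕ)
    (m : Fin (k + 1) → ℕ) (hm : ∀ i, m i ≤ n)
    (c : Fin (k + 1) → Finset ℕ → ℕ) :
    ∃ T : Set ℕ, T.Infinite ∧ ∃ j : ℕ,
      ∀ i : Fin (k + 1), ∀ s : Finset ℕ, ↑s ⊆ T → s.card = m i → c i s ≠ j := by
  -- truncated colorings into Fin (k + 3)
  set g : Fin (k + 1) → Finset ℕ → Fin (k + 3) :=
    fun i s => ⟨min (c i s) (k + 2), by omega⟩ with hg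
  obtain ⟨T, _, hTinf, v, hv⟩ :=
    myMultiRamsey (k + 1) m g Set.univ Set.infinite_univ
  -- pick j < k + 2 not among the homogeneous values
  have hcard : (Finset.image (fun i => (v i : ℕ)) Finset.univ).card < (Finset.range (k + 2)).card := by
    calc (Finset.image (fun i => (v i : ℕ)) Finset.univ).card
        ≤ (Finset.univ : Finset (Fin (k + 1))).card := Finset.card_image_le
      _ < (Finset.range (k + 2)).card := by simp
  have hnsub : ¬ (Finset.range (k + 2) ⊆ Finset.image (fun i => (v i : ℕ)) Finset.univ) := by
    intro h
    exact absurd (Finset.card_le_card h) (by omega)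
  obtain ⟨j, hjmem, hjnot⟩ := Finset.not_subset.mp hnsub
  have hjlt : j < k + 2 := Finset.mem_range.mp hjmem
  refine ⟨T, hTinf, j, fun i s hs hcard' hcj => ?_⟩
  have := hv i s hs hcard'
  have hval : (g i s : ℕ) = (v i : ℕ) := by rw [this]
  rw [hg] at hval
  simp only at hval
  rw [hcj] at hval
  have : min j (k + 2) = j := by omega
  rw [this] at hval
  exact hjnot (Finset.mem_image.mpr ⟨i, Finset.mem_univ i, hval.symm⟩)
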